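/- Suppose the corner equation (E) and the superposition formulas (S1), (S2) hold for all k ∈ ℤ/Nℤ, and assume that λ·e^{x̂_k} ≠ μ·e^{x̃_k} for all k. Then for every k ∈ ℤ/Nℤ the multiplicative superposition formula holds: e^{x̂̃_k − x̃_k − x̂_k + x_{k+1}} = (λe^{x̂_{k+1}} − μe^{x̃_{k+1}})/(λe^{x̂_k} − μe^{x̃_k}). -/

import Mathlib

/-- The multiplicative superposition formula for the Toda lattice
follows from the corner equation (E) and the superposition formulas
(S1), (S2). -/
theorem toda_multiplicative_superposition
    (N : ℕ) [NeZero N] (x xt xh xth : ZMod N → ℝ) (lam mu : ℝ)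
    (hlam : lam ≠ 0) (hmu : mu ≠ 0) (hlm : lam ≠ mu)
    (hE : ∀ k : ZMod N,
      (1 / lam) * (Real.exp (xt k - x k) - 1) + lam * Real.exp (x k - xt (k - 1)) =
      (1 / mu) * (Real.exp (xh k - x k) - 1) + mu * Real.exp (x k - xh (k - 1)))
    (hS1 : ∀ k : ZMod N,
      (1 / lam) * (Real.exp (xth k - xh k) - 1) - (1 / mu) * (Real.exp (xth k - xt k) - 1)
        + lam * Real.exp (x (k + 1) - xt k) - mu * Real.exp (x (k + 1) - xh k) = 0)
    (hS2 : ∀ k : ZMod N,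
      (1 / lam) * (Real.exp (xt (k + 1) - x (k + 1)) - 1)
        - (1 / mu) * (Real.exp (xh (k + 1) - x (k + 1)) - 1)
        + lam * Real.exp (xh (k + 1) - xth k) - mu * Real.exp (xt (k + 1) - xth k) = 0)
    (hnd : ∀ k : ZMod N, lam * Real.exp (xh k) ≠ mu * Real.exp (xt k)) :
    ∀ k : ZMod N,
      Real.exp (xth k - xt k - xh k + x (k + 1)) =
        (lam * Real.exp (xh (k + 1)) - mu * Real.exp (xt (k + 1)))
          / (lam * Real.exp (xh k) - mu * Real.exp (xt k)) := by
  intro k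
  have h1 := hS1 k
  have h2 := hS2 k
  set u := Real.exp (xt k) with hu
  set v := Real.exp (xh k) with hv
  set w := Real.exp (x (k+1)) with hw
  set z := Real.exp (xth k) with hz
  set p := Real.exp (xt (k+1)) with hp
  set q := Real.exp (xh (k+1)) with hq
  have hu0 : u ≠ 0 := Real.exp_ne_zero _
  have hv0 : v ≠ 0 := Real.exp_ne_zero _
  have hw0 : w ≠ 0 := Real.exp_ne_zero _
  have hz0 : z ≠ 0 := Real.exp_ne_zero _
  have hA : lam * v - mu * u ≠ 0 := sub_ne_zero.mpr (hnd k)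
  have hA' : lam * q - mu * p ≠ 0 := sub_ne_zero.mpr (hnd (k+1))
  simp only [Real.exp_sub, Real.exp_add, ← hu, ← hv, ← hw, ← hz, ← hp, ← hq] at h1 h2 ⊢
  field_simp at h1 h2 ⊢
  have key1 : (lam * v - mu * u) * (z - lam * mu * w) = (lam - mu) * (u * v) := by
    have key1m : ((lam * v - mu * u) * (z - lam * mu * w)) * (u * v) =
        ((lam - mu) * (u * v)) * (u * v) := by linear_combination (-(u * v)) * h1
    exact mul_right_cancel₀ (mul_ne_zero hu0 hv0) key1m
  have hzw : z - lam * mu * w ≠ 0 := by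
    intro h
    rw [h, mul_zero] at key1
    exact (mul_ne_zero (mul_ne_zero (sub_ne_zero.mpr hlm) hu0) hv0)
      (by linear_combination -key1)
  have key2 : (lam * q - mu * p) * (z - lam * mu * w) = (lam - mu) * (w * z) := by
    have key2m : ((lam * q - mu * p) * (z - lam * mu * w)) * (w * z) =
        ((lam - mu) * (w * z)) * (w * z) := by linear_combination (-(w * z)) * h2
    exact mul_right_cancel₀ (mul_ne_zero hw0 hz0) key2m
  have gm : (z * w * (lam * v - mu * u)) * (z - lam * mu * w) =
      ((lam * q - mu * p) * (u * v)) * (z - lam * mu * w) := by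
    linear_combination (w * z) * key1 - (u * v) * key2
  exact mul_right_cancel₀ hzw (by linear_combination gm)
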